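/- For any time step s > 0 and any periodic grid functions φ^{k−1}, φ^k, there exists a unique periodic grid function φ^{k+1} satisfying the second-order convex-splitting nCH scheme φ^{k+1} − φ^k = s Δ_h w^{k+1/2}. Moreover, any such solution is discretely mass conservative: ⟨φ^{k+1} − φ^k, 1⟩ = 0. -/

import Mathlib

open scoped BigOperators
open MeasureTheory

/-! Discrete setting: periodic grid functions on an `m × n` periodic grid are maps
`ZMod m × ZMod n → ℝ`. -/

/-- Discrete inner product `⟨φ,ψ⟩ = Σ_{i,j} φ_{i,j} ψ_{i,j}`. -/
noncomputable def gip {m n : ℕ} [NeZero m] [NeZero n] (φ ψ : ZMod m × ZMod n → ℝ) : ℝ :=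
  ∑ p : ZMod m × ZMod n, φ p * ψ p

/-- Discrete periodic convolution `[f⋆φ]_{i,j} = h² Σ_{k,l} f_{k,l} φ_{i−k,j−l}`. -/
noncomputable def gconv {m n : ℕ} [NeZero m] [NeZero n] (h : ℝ) (f φ : ZMod m × ZMod n → ℝ) :
    ZMod m × ZMod n → ℝ :=
  fun p => h ^ 2 * ∑ q : ZMod m × ZMod n, f q * φ (p.1 - q.1, p.2 - q.2)

/-- `[f⋆1] = h² Σ_{k,l} f_{k,l}`. -/
noncomputable def gconvOne {m n : ℕ} [NeZero m] [NeZero n] (h : ℝ) (f : ZMod m × ZMod n → ℝ) : ℝ :=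
  h ^ 2 * ∑ q : ZMod m × ZMod n, f q

/-- A kernel is even when `f_{k,l} = f_{−k,−l}`. -/
def EvenKer {m n : ℕ} (f : ZMod m × ZMod n → ℝ) : Prop :=
  ∀ p : ZMod m × ZMod n, f (-p.1, -p.2) = f p

/-- `‖φ‖₂² = h² Σ_{i,j} φ_{i,j}²`. -/
noncomputable def norm2sq {m n : ℕ} [NeZero m] [NeZero n] (h : ℝ) (φ : ZMod m × ZMod n → ℝ) : ℝ :=
  h ^ 2 * ∑ p : ZMod m × ZMod n, (φ p) ^ 2

/-- `‖φ‖₂ = (h² Σ_{i,j} φ_{i,j}²)^{1/2}`. -/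
noncomputable def norm2 {m n : ℕ} [NeZero m] [NeZero n] (h : ℝ) (φ : ZMod m × ZMod n → ℝ) : ℝ :=
  Real.sqrt (norm2sq h φ)

/-- `‖φ‖₄⁴ = h² Σ_{i,j} φ_{i,j}⁴`. -/
noncomputable def norm4p4 {m n : ℕ} [NeZero m] [NeZero n] (h : ℝ) (φ : ZMod m × ZMod n → ℝ) : ℝ :=
  h ^ 2 * ∑ p : ZMod m × ZMod n, (φ p) ^ 4

/-- `‖φ‖₄ = (h² Σ_{i,j} |φ_{i,j}|⁴)^{1/4}`. -/
noncomputable def norm4 {m n : ℕ} [NeZero m] [NeZero n] (h : ℝ) (φ : ZMod m × ZMod n → ℝ) : ℝ :=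
  (norm4p4 h φ) ^ ((1 : ℝ) / 4)

/-- `‖φ‖_∞ = max_{i,j} |φ_{i,j}|`. -/
noncomputable def normInf {m n : ℕ} [NeZero m] [NeZero n] (φ : ZMod m × ZMod n → ℝ) : ℝ :=
  ⨆ p : ZMod m × ZMod n, |φ p|

/-- Five-point discrete Laplacian. -/
noncomputable def glap {m n : ℕ} (h : ℝ) (φ : ZMod m × ZMod n → ℝ) : ZMod m × ZMod n → ℝ :=
  fun p => (φ (p.1 + 1, p.2) + φ (p.1 - 1, p.2) + φ (p.1, p.2 + 1) + φ (p.1, p.2 - 1) - 4 * φ p) / h ^ 2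

/-- `‖∇_h φ‖₂² = Σ_{i,j} [(φ_{i+1,j}−φ_{i,j})² + (φ_{i,j+1}−φ_{i,j})²]`. -/
noncomputable def gradNormSq {m n : ℕ} [NeZero m] [NeZero n] (φ : ZMod m × ZMod n → ℝ) : ℝ :=
  ∑ p : ZMod m × ZMod n, ((φ (p.1 + 1, p.2) - φ p) ^ 2 + (φ (p.1, p.2 + 1) - φ p) ^ 2)

/-- `‖∇_h φ‖_∞`. -/
noncomputable def gradNormInf {m n : ℕ} [NeZero m] [NeZero n] (h : ℝ) (φ : ZMod m × ZMod n → ℝ) : ℝ :=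
  ⨆ p : ZMod m × ZMod n, max (|φ (p.1 + 1, p.2) - φ p| / h) (|φ (p.1, p.2 + 1) - φ p| / h)

/-- Pointwise nonlinear term `η(a,b) = (1/4)(a²+b²)(a+b)`. -/
noncomputable def etaNL {m n : ℕ} (a b : ZMod m × ZMod n → ℝ) : ZMod m × ZMod n → ℝ :=
  fun p => (1 / 4) * ((a p) ^ 2 + (b p) ^ 2) * (a p + b p)

/-- The chemical potential
`w^{k+1/2} = η(φᵏ,φ^{k+1}) + B_c φ^{k+1/2} − B_e φ̂^{k+1/2} − [J⋆φ̂^{k+1/2}]`,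
where `φ^{k+1/2} = (φᵏ+φ^{k+1})/2` and `φ̂^{k+1/2} = (3/2)φᵏ − (1/2)φ^{k−1}`. -/
noncomputable def chemPot {m n : ℕ} [NeZero m] [NeZero n] (h Bc Be : ℝ)
    (J φold φ φnew : ZMod m × ZMod n → ℝ) : ZMod m × ZMod n → ℝ :=
  fun p => etaNL φ φnew p + Bc * ((1 / 2) * (φ p + φnew p))
    - Be * ((3 / 2) * φ p - (1 / 2) * φold p)
    - gconv h J (fun q => (3 / 2) * φ q - (1 / 2) * φold q) p

/-- Discrete energy
`F(φ) = (1/4)‖φ‖₄⁴ + ((γ_c−γ_e)/2)‖φ‖₂² + ([J⋆1]/2)‖φ‖₂² − (h²/2)⟨φ,[J⋆φ]⟩`. -/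
noncomputable def Fdisc {m n : ℕ} [NeZero m] [NeZero n] (h γc γe : ℝ)
    (J φ : ZMod m × ZMod n → ℝ) : ℝ :=
  (1 / 4) * norm4p4 h φ + ((γc - γe) / 2) * norm2sq h φ + (gconvOne h J / 2) * norm2sq h φ
    - (h ^ 2 / 2) * gip φ (gconv h J φ)

/-- Discrete pseudo energy
`ℰ(φ,ψ) = F(ψ) + ((B_c+B_e)/4)‖ψ−φ‖₂² + (h²/4)⟨[J⋆(ψ−φ)], ψ−φ⟩`. -/
noncomputable def pseudoE {m n : ℕ} [NeZero m] [NeZero n] (h γc γe Bc Be : ℝ)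
    (J φ ψ : ZMod m × ZMod n → ℝ) : ℝ :=
  Fdisc h γc γe J ψ + ((Bc + Be) / 4) * norm2sq h (ψ - φ)
    + (h ^ 2 / 4) * gip (gconv h J (ψ - φ)) (ψ - φ)

/-! Continuous setting: `Ω = (0,L₁) × (0,L₂)` with periodic boundary conditions. -/

/-- The domain `Ω = (0,L₁) × (0,L₂)`. -/
noncomputable def box (L₁ L₂ : ℝ) : Set (ℝ × ℝ) := Set.Ioo 0 L₁ ×ˢ Set.Ioo 0 L₂

/-- Periodic convolution `(J∗φ)(x) = ∫_Ω J(x−y) φ(y) dy`. -/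
noncomputable def cconv (L₁ L₂ : ℝ) (J φ : ℝ × ℝ → ℝ) : ℝ × ℝ → ℝ :=
  fun x => ∫ y in box L₁ L₂, J (x.1 - y.1, x.2 - y.2) * φ y

/-- `J∗1 = ∫_Ω J(x) dx`. -/
noncomputable def cJone (L₁ L₂ : ℝ) (J : ℝ × ℝ → ℝ) : ℝ := ∫ x in box L₁ L₂, J x

/-- `Ω`-periodicity of a function on `ℝ²`. -/
def PerFun (L₁ L₂ : ℝ) (φ : ℝ × ℝ → ℝ) : Prop :=
  ∀ x : ℝ × ℝ, φ (x.1 + L₁, x.2) = φ x ∧ φ (x.1, x.2 + L₂) = φ x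

/-- The nonlocal energy
`E(φ) = (1/4)‖φ‖⁴_{L⁴} + ((γ_c − γ_e + J∗1)/2)‖φ‖²_{L²} − (1/2)⟨φ, J∗φ⟩_{L²}`. -/
noncomputable def cE (L₁ L₂ γc γe : ℝ) (J φ : ℝ × ℝ → ℝ) : ℝ :=
  (1 / 4) * (∫ x in box L₁ L₂, (φ x) ^ 4)
  + ((γc - γe + cJone L₁ L₂ J) / 2) * (∫ x in box L₁ L₂, (φ x) ^ 2)
  - (1 / 2) * (∫ x in box L₁ L₂, φ x * cconv L₁ L₂ J φ x)

/-- The grid point `p_{i,j} = ((i−1/2)h, (j−1/2)h)`. -/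
noncomputable def gridPt {m n : ℕ} (h : ℝ) (p : ZMod m × ZMod n) : ℝ × ℝ :=
  (((p.1.val : ℝ) - 1 / 2) * h, ((p.2.val : ℝ) - 1 / 2) * h)

/-- Grid restriction of a continuous function. -/
noncomputable def gridRestrict (m n : ℕ) (h : ℝ) (F : ℝ × ℝ → ℝ) : ZMod m × ZMod n → ℝ :=
  fun p => F (gridPt h p)

/-- The continuous Laplacian on `ℝ²` (as iterated partial derivatives). -/
noncomputable def clap (g : ℝ × ℝ → ℝ) (x : ℝ × ℝ) : ℝ :=
  deriv (fun a => deriv (fun b => g (b, x.2)) a) x.1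
    + deriv (fun a => deriv (fun b => g (x.1, b)) a) x.2


/-! ### Auxiliary machinery for Statement 6 -/

section Stmt6Aux

open Finset

variable {m n : ℕ} [NeZero m] [NeZero n]

set_option linter.unusedSectionVars false

lemma sum_shift (c : ZMod m × ZMod n) (f : ZMod m × ZMod n → ℝ) :
    ∑ p : ZMod m × ZMod n, f (p + c) = ∑ p : ZMod m × ZMod n, f p :=
  Equiv.sum_comp (Equiv.addRight c) f

lemma glap_eq (h : ℝ) (φ : ZMod m × ZMod n → ℝ) (p : ZMod m × ZMod n) :
    glap h φ p = (φ (p + (1, 0)) + φ (p - (1, 0)) + φ (p + (0, 1)) + φ (p - (0, 1))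
      - 4 * φ p) / h ^ 2 := by
  have e1 : p + ((1 : ZMod m), (0 : ZMod n)) = (p.1 + 1, p.2) := by simp [Prod.ext_iff]
  have e2 : p - ((1 : ZMod m), (0 : ZMod n)) = (p.1 - 1, p.2) := by simp [Prod.ext_iff]
  have e3 : p + ((0 : ZMod m), (1 : ZMod n)) = (p.1, p.2 + 1) := by simp [Prod.ext_iff]
  have e4 : p - ((0 : ZMod m), (1 : ZMod n)) = (p.1, p.2 - 1) := by simp [Prod.ext_iff]
  rw [e1, e2, e3, e4]; rfl

lemma sum_shift' (c : ZMod m × ZMod n) (f : ZMod m × ZMod n → ℝ) :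
    ∑ p : ZMod m × ZMod n, f (p - c) = ∑ p : ZMod m × ZMod n, f p := by
  simpa [sub_eq_add_neg] using sum_shift (-c) f

lemma sum_glap (h : ℝ) (φ : ZMod m × ZMod n → ℝ) :
    ∑ p : ZMod m × ZMod n, glap h φ p = 0 := by
  simp only [glap_eq]
  rw [← Finset.sum_div]
  rw [show (∑ p : ZMod m × ZMod n, (φ (p + (1,0)) + φ (p - (1,0)) + φ (p + (0,1)) + φ (p - (0,1)) - 4 * φ p)) = (∑ p : ZMod m × ZMod n, φ (p + (1,0))) + (∑ p : ZMod m × ZMod n, φ (p - (1,0))) + (∑ p : ZMod m × ZMod n, φ (p + (0,1))) + (∑ p : ZMod m × ZMod n, φ (p - (0,1))) - 4 * ∑ p : ZMod m × ZMod n, φ p from by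
    rw [Finset.sum_sub_distrib, Finset.sum_add_distrib, Finset.sum_add_distrib, Finset.sum_add_distrib, Finset.mul_sum]]
  rw [sum_shift, sum_shift', sum_shift, sum_shift']
  ring

lemma key_shift_mul (e : ZMod m × ZMod n) (φ ψ : ZMod m × ZMod n → ℝ) :
    ∑ p : ZMod m × ZMod n, φ (p + e) * ψ p = ∑ p : ZMod m × ZMod n, φ p * ψ (p - e) := by
  have := sum_shift e (fun p => φ p * ψ (p - e))
  simpa using this

lemma key_shift_mul' (e : ZMod m × ZMod n) (φ ψ : ZMod m × ZMod n → ℝ) :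
    ∑ p : ZMod m × ZMod n, φ (p - e) * ψ p = ∑ p : ZMod m × ZMod n, φ p * ψ (p + e) := by
  have := sum_shift' e (fun p => φ p * ψ (p + e))
  simp only [sub_add_cancel] at this
  exact this.symm ▸ (Finset.sum_congr rfl (fun p _ => rfl))

lemma glap_expand_mul (h : ℝ) (φ ψ : ZMod m × ZMod n → ℝ) :
    ∑ p : ZMod m × ZMod n, glap h φ p * ψ p
      = ((∑ p : ZMod m × ZMod n, φ (p+(1,0)) * ψ p) + (∑ p : ZMod m × ZMod n, φ (p-(1,0)) * ψ p)
        + (∑ p : ZMod m × ZMod n, φ (p+(0,1)) * ψ p) + (∑ p : ZMod m × ZMod n, φ (p-(0,1)) * ψ p)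
        - 4 * ∑ p : ZMod m × ZMod n, φ p * ψ p) / h ^ 2 := by
  calc ∑ p : ZMod m × ZMod n, glap h φ p * ψ p
      = ∑ p : ZMod m × ZMod n, ((φ (p+(1,0)) + φ (p-(1,0)) + φ (p+(0,1)) + φ (p-(0,1)) - 4 * φ p) * ψ p)/h^2 :=
        Finset.sum_congr rfl (fun p _ => by rw [glap_eq]; ring)
    _ = (∑ p : ZMod m × ZMod n, (φ (p+(1,0)) + φ (p-(1,0)) + φ (p+(0,1)) + φ (p-(0,1)) - 4 * φ p) * ψ p)/h^2 := by
        rw [Finset.sum_div]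
    _ = _ := by
        congr 1
        rw [← Finset.sum_add_distrib, ← Finset.sum_add_distrib, ← Finset.sum_add_distrib,
          Finset.mul_sum, ← Finset.sum_sub_distrib]
        exact Finset.sum_congr rfl (fun p _ => by ring)

lemma glap_selfadj (h : ℝ) (φ ψ : ZMod m × ZMod n → ℝ) :
    ∑ p : ZMod m × ZMod n, glap h φ p * ψ p = ∑ p : ZMod m × ZMod n, φ p * glap h ψ p := by
  have R : ∑ p : ZMod m × ZMod n, φ p * glap h ψ p = ∑ p : ZMod m × ZMod n, glap h ψ p * φ p :=
    Finset.sum_congr rfl (fun p _ => mul_comm _ _)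
  rw [R, glap_expand_mul, glap_expand_mul, key_shift_mul (1,0), key_shift_mul' (1,0),
    key_shift_mul (0,1), key_shift_mul' (0,1)]
  congr 1
  rw [key_shift_mul (1,0), key_shift_mul' (1,0), key_shift_mul (0,1), key_shift_mul' (0,1)]
  have c : ∀ (e : ZMod m × ZMod n), (∑ p : ZMod m × ZMod n, ψ p * φ (p - e)) = ∑ p : ZMod m × ZMod n, φ (p-e) * ψ p :=
    fun e => Finset.sum_congr rfl (fun p _ => mul_comm _ _)
  have c' : ∀ (e : ZMod m × ZMod n), (∑ p : ZMod m × ZMod n, ψ p * φ (p + e)) = ∑ p : ZMod m × ZMod n, φ (p+e) * ψ p :=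
    fun e => Finset.sum_congr rfl (fun p _ => mul_comm _ _)
  rw [c, c', c, c', key_shift_mul (1,0), key_shift_mul' (1,0), key_shift_mul (0,1), key_shift_mul' (0,1)]
  have cc : (∑ p : ZMod m × ZMod n, ψ p * φ p) = ∑ p : ZMod m × ZMod n, φ p * ψ p :=
    Finset.sum_congr rfl (fun p _ => mul_comm _ _)
  rw [cc]
  ring

lemma grid_eq_shift1 (p : ZMod m × ZMod n) : ((p.1 + 1, p.2) : ZMod m × ZMod n) = p + (1,0) := by
  simp [Prod.ext_iff]

lemma grid_eq_shift2 (p : ZMod m × ZMod n) : ((p.1, p.2 + 1) : ZMod m × ZMod n) = p + (0,1) := by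
  simp [Prod.ext_iff]

lemma glap_dirichlet (h : ℝ) (φ : ZMod m × ZMod n → ℝ) :
    ∑ p : ZMod m × ZMod n, glap h φ p * φ p = -gradNormSq φ / h ^ 2 := by
  rw [glap_expand_mul, key_shift_mul' (1,0), key_shift_mul' (0,1)]
  have c' : ∀ (e : ZMod m × ZMod n), (∑ p : ZMod m × ZMod n, φ p * φ (p + e)) = ∑ p : ZMod m × ZMod n, φ (p+e) * φ p :=
    fun e => Finset.sum_congr rfl (fun p _ => mul_comm _ _)
  rw [c', c']
  have hg : gradNormSq φ = ∑ p : ZMod m × ZMod n,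
      ((φ (p + (1,0)) - φ p)^2 + (φ (p + (0,1)) - φ p)^2) := by
    unfold gradNormSq
    exact Finset.sum_congr rfl (fun p _ => by rw [grid_eq_shift1, grid_eq_shift2])
  have hsq1 := sum_shift ((1:ZMod m),(0:ZMod n)) (fun p => φ p ^ 2)
  have hsq2 := sum_shift ((0:ZMod m),(1:ZMod n)) (fun p => φ p ^ 2)
  have expand : ∑ p : ZMod m × ZMod n, ((φ (p + (1,0)) - φ p)^2 + (φ (p + (0,1)) - φ p)^2)
      = (∑ p : ZMod m × ZMod n, φ (p+(1,0))^2) + (∑ p : ZMod m × ZMod n, φ (p+(0,1))^2)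
        + 2 * (∑ p : ZMod m × ZMod n, φ p ^2)
        - 2 * (∑ p : ZMod m × ZMod n, φ (p+(1,0)) * φ p)
        - 2 * (∑ p : ZMod m × ZMod n, φ (p+(0,1)) * φ p) := by
    rw [Finset.mul_sum, Finset.mul_sum, Finset.mul_sum, ← Finset.sum_add_distrib,
      ← Finset.sum_add_distrib, ← Finset.sum_sub_distrib, ← Finset.sum_sub_distrib]
    exact Finset.sum_congr rfl (fun p _ => by ring)
  rw [hg, expand, hsq1, hsq2]
  have hsq : (∑ p : ZMod m × ZMod n, φ p * φ p) = ∑ p : ZMod m × ZMod n, φ p ^ 2 :=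
    Finset.sum_congr rfl (fun p _ => (sq (φ p)).symm)
  rw [hsq]
  ring

lemma gradNormSq_nonneg (φ : ZMod m × ZMod n → ℝ) : 0 ≤ gradNormSq φ :=
  Finset.sum_nonneg (fun p _ => add_nonneg (sq_nonneg _) (sq_nonneg _))

lemma const_of_shift (f : ZMod m × ZMod n → ℝ)
    (h1 : ∀ p : ZMod m × ZMod n, f (p.1 + 1, p.2) = f p)
    (h2 : ∀ p : ZMod m × ZMod n, f (p.1, p.2 + 1) = f p)
    (p q : ZMod m × ZMod n) : f p = f q := by
  have A : ∀ (k : ℕ) (i : ZMod m) (j : ZMod n), f (i + (k : ZMod m), j) = f (i, j) := by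
    intro k
    induction k with
    | zero => intro i j; simp
    | succ k ih =>
      intro i j
      have : ((k+1 : ℕ) : ZMod m) = (k : ZMod m) + 1 := by push_cast; ring
      rw [this, ← add_assoc]
      have := h1 (i + (k : ZMod m), j)
      simp only at this
      rw [this, ih]
  have B : ∀ (k : ℕ) (i : ZMod m) (j : ZMod n), f (i, j + (k : ZMod n)) = f (i, j) := by
    intro k
    induction k with
    | zero => intro i j; simp
    | succ k ih =>
      intro i j
      have : ((k+1 : ℕ) : ZMod n) = (k : ZMod n) + 1 := by push_cast; ring
      rw [this, ← add_assoc]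
      have := h2 (i, j + (k : ZMod n))
      simp only at this
      rw [this, ih]
  have hx : p.1 + ((q.1 - p.1).val : ZMod m) = q.1 := by
    rw [ZMod.natCast_val, ZMod.cast_id]; ring
  have hy : p.2 + ((q.2 - p.2).val : ZMod n) = q.2 := by
    rw [ZMod.natCast_val, ZMod.cast_id]; ring
  calc f p = f (p.1, p.2) := by rfl
    _ = f (p.1 + ((q.1 - p.1).val : ZMod m), p.2) := (A _ _ _).symm
    _ = f (q.1, p.2) := by rw [hx]
    _ = f (q.1, p.2 + ((q.2 - p.2).val : ZMod n)) := (B _ _ _).symm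
    _ = f (q.1, q.2) := by rw [hy]
    _ = f q := by rfl

lemma continuous_gradNormSq : Continuous (gradNormSq (m := m) (n := n)) := by
  unfold gradNormSq
  exact continuous_finset_sum Finset.univ (fun p _ =>
    (((continuous_apply ((p.1 + 1, p.2) : ZMod m × ZMod n)).sub (continuous_apply p)).pow 2).add
    (((continuous_apply ((p.1, p.2 + 1) : ZMod m × ZMod n)).sub (continuous_apply p)).pow 2))

lemma gradNormSq_smul (c : ℝ) (v : ZMod m × ZMod n → ℝ) :
    gradNormSq (c • v) = c^2 * gradNormSq v := by
  unfold gradNormSq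
  rw [Finset.mul_sum]
  exact Finset.sum_congr rfl (fun p _ => by simp [Pi.smul_apply, smul_eq_mul]; ring)

lemma gradNormSq_eq_zero {φ : ZMod m × ZMod n → ℝ} (h0 : gradNormSq φ = 0) :
    ∀ p q : ZMod m × ZMod n, φ p = φ q := by
  have hz : ∀ p : ZMod m × ZMod n,
      ((φ (p.1 + 1, p.2) - φ p) ^ 2 + (φ (p.1, p.2 + 1) - φ p) ^ 2) = 0 := by
    intro p
    have := (Finset.sum_eq_zero_iff_of_nonneg
      (fun p _ => add_nonneg (sq_nonneg _) (sq_nonneg _))).mp h0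
    exact this p (Finset.mem_univ p)
  apply const_of_shift
  · intro p
    have := hz p
    have h1 : (φ (p.1 + 1, p.2) - φ p) ^ 2 = 0 := by
      nlinarith [sq_nonneg (φ (p.1 + 1, p.2) - φ p), sq_nonneg (φ (p.1, p.2 + 1) - φ p)]
    have := pow_eq_zero_iff (n := 2) (by norm_num) |>.mp h1
    linarith [sub_eq_zero.mp this]
  · intro p
    have := hz p
    have h1 : (φ (p.1, p.2 + 1) - φ p) ^ 2 = 0 := by
      nlinarith [sq_nonneg (φ (p.1 + 1, p.2) - φ p), sq_nonneg (φ (p.1, p.2 + 1) - φ p)]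
    have := pow_eq_zero_iff (n := 2) (by norm_num) |>.mp h1
    linarith [sub_eq_zero.mp this]

lemma sum_const_grid (c : ℝ) : ∑ _p : ZMod m × ZMod n, c = (m * n : ℕ) * c := by
  simp [Finset.sum_const, Finset.card_univ, mul_comm]

lemma exists_mu : ∃ μ > 0, ∀ v : ZMod m × ZMod n → ℝ,
    (∑ p : ZMod m × ZMod n, v p) = 0 → μ * ‖v‖^2 ≤ gradNormSq v := by
  by_cases hC : ∃ v : ZMod m × ZMod n → ℝ, (∑ p : ZMod m × ZMod n, v p) = 0 ∧ ‖v‖ = 1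
  · obtain ⟨v₁, hv₁⟩ := hC
    set C : Set (ZMod m × ZMod n → ℝ) := {v | (∑ p : ZMod m × ZMod n, v p) = 0 ∧ ‖v‖ = 1} with hCdef
    have hclosed : IsClosed C := by
      apply IsClosed.inter
      · exact isClosed_eq (continuous_finset_sum _ (fun p _ => continuous_apply p)) continuous_const
      · exact isClosed_eq continuous_norm continuous_const
    have hbdd : Bornology.IsBounded C := by
      apply Bornology.IsBounded.subset (Metric.isBounded_closedBall (x := (0 : ZMod m × ZMod n → ℝ)) (r := 1))
      intro v hv
      simp only [Metric.mem_closedBall, dist_zero_right]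
      exact le_of_eq hv.2
    have hcpt : IsCompact C := Metric.isCompact_of_isClosed_isBounded hclosed hbdd
    obtain ⟨v₀, hv₀C, hmin⟩ := hcpt.exists_isMinOn ⟨v₁, hv₁⟩ (continuous_gradNormSq.continuousOn)
    refine ⟨gradNormSq v₀, ?_, ?_⟩
    · rcases lt_or_eq_of_le (gradNormSq_nonneg v₀) with h | h
      · exact h
      · exfalso
        have hconst := gradNormSq_eq_zero h.symm
        have hfun : v₀ = fun _ => v₀ 0 := funext (fun p => hconst p 0)
        have hsum := hv₀C.1
        rw [hfun, sum_const_grid] at hsum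
        have hmn : (0 : ℝ) < (m * n : ℕ) := by
          have h1 := Nat.pos_of_ne_zero (NeZero.ne m)
          have h2 := Nat.pos_of_ne_zero (NeZero.ne n)
          positivity
        have hv00 : v₀ 0 = 0 := by
          rcases mul_eq_zero.mp hsum with h' | h'
          · exact absurd h' (ne_of_gt hmn)
          · exact h'
        have : v₀ = 0 := by rw [hfun, hv00]; rfl
        rw [this] at hv₀C
        simpa using hv₀C.2
    · intro v hv
      by_cases hv0 : v = 0
      · simp [hv0, gradNormSq_nonneg]
      · have hnv : ‖v‖ ≠ 0 := norm_ne_zero_iff.mpr hv0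
        have hmem : (‖v‖⁻¹ • v) ∈ C := by
          constructor
          · simp only [Pi.smul_apply, smul_eq_mul, ← Finset.mul_sum, hv, mul_zero]
          · rw [norm_smul]
            simp [abs_of_nonneg (inv_nonneg.mpr (norm_nonneg v)), inv_mul_cancel₀ hnv]
        have h2 : gradNormSq v₀ ≤ gradNormSq (‖v‖⁻¹ • v) := hmin hmem
        rw [gradNormSq_smul] at h2
        have hpos : (0:ℝ) < ‖v‖^2 := by positivity
        have h3 : gradNormSq v₀ ≤ ‖v‖⁻¹^2 * gradNormSq v := h2
        calc gradNormSq v₀ * ‖v‖^2 ≤ (‖v‖⁻¹^2 * gradNormSq v) * ‖v‖^2 := by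
              apply mul_le_mul_of_nonneg_right h3 (le_of_lt hpos)
          _ = gradNormSq v := by field_simp
  · refine ⟨1, one_pos, fun v hv => ?_⟩
    have hv0 : v = 0 := by
      by_contra hne
      have hnv : ‖v‖ ≠ 0 := norm_ne_zero_iff.mpr hne
      apply hC
      refine ⟨‖v‖⁻¹ • v, ?_, ?_⟩
      · simp only [Pi.smul_apply, smul_eq_mul, ← Finset.mul_sum, hv, mul_zero]
      · rw [norm_smul]
        simp [abs_of_nonneg (inv_nonneg.mpr (norm_nonneg v)), inv_mul_cancel₀ hnv]
    simp [hv0, gradNormSq_nonneg]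

end Stmt6Aux

/-- The convex part of the per-point potential. -/
noncomputable def Wfun (a B b : ℝ) : ℝ :=
  a^3*b/4 + a^2*b^2/8 + a*b^3/12 + b^4/16 + B*b^2/4

/-- Its derivative in the second variable. -/
noncomputable def Wd (a B b : ℝ) : ℝ :=
  (1/4) * (a^2 + b^2) * (a + b) + B/2 * b

/-- The objective functional for the variational existence argument. -/
noncomputable def Hfun {m n : ℕ} [NeZero m] [NeZero n] (h s Bc : ℝ)
    (K φg : ZMod m × ZMod n → ℝ) (w : ZMod m × ZMod n → ℝ) : ℝ :=
  (∑ p : ZMod m × ZMod n, Wfun (φg p) Bc (φg p + s * glap h w p))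
  + s * (∑ p : ZMod m × ZMod n, K p * glap h w p)
  - (s/2) * (∑ p : ZMod m × ZMod n, glap h w p * w p)
  + (∑ p : ZMod m × ZMod n, w p)^2

section Stmt6Aux2

open Finset

variable {m n : ℕ} [NeZero m] [NeZero n]

set_option linter.unusedSectionVars false

lemma hasDerivAt_Wfun (a B x : ℝ) : HasDerivAt (fun b => Wfun a B b) (Wd a B x) x := by
  unfold Wfun Wd
  have h1 : HasDerivAt (fun b : ℝ => a^3*b/4) (a^3/4) x := by
    simpa using (((hasDerivAt_id x).const_mul (a^3)).div_const 4)
  have h2 : HasDerivAt (fun b : ℝ => a^2*b^2/8) (a^2*(2*x)/8) x := by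
    simpa using (((hasDerivAt_pow 2 x).const_mul (a^2)).div_const 8)
  have h3 : HasDerivAt (fun b : ℝ => a*b^3/12) (a*(3*x^2)/12) x := by
    simpa using (((hasDerivAt_pow 3 x).const_mul a).div_const 12)
  have h4 : HasDerivAt (fun b : ℝ => b^4/16) (4*x^3/16) x := by
    simpa using ((hasDerivAt_pow 4 x).div_const 16)
  have h5 : HasDerivAt (fun b : ℝ => B*b^2/4) (B*(2*x)/4) x := by
    simpa using (((hasDerivAt_pow 2 x).const_mul B).div_const 4)
  have := (((h1.add h2).add h3).add h4).add h5
  refine this.congr_deriv ?_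
  ring

lemma hasDerivAt_affine (c d : ℝ) : HasDerivAt (fun t : ℝ => c + t*d) d 0 := by
  simpa using ((hasDerivAt_id (0:ℝ)).mul_const d).const_add c

lemma hasDerivAt_W_affine (a B c d : ℝ) :
    HasDerivAt (fun t : ℝ => Wfun a B (c + t*d)) (Wd a B c * d) 0 := by
  have := (hasDerivAt_Wfun a B (c + 0*d)).comp 0 (hasDerivAt_affine c d)
  simpa [Function.comp_def] using this

lemma W_lb (a B b : ℝ) (hB : 0 ≤ B) : -(a^4) ≤ Wfun a B b := by
  unfold Wfun
  nlinarith [sq_nonneg (b^2 + a*b), sq_nonneg (b^2 + 2*a*b), sq_nonneg (a*b + 2*a^2),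
    sq_nonneg (a*b + 3*a^2), sq_nonneg (b^2), sq_nonneg (a^2), sq_nonneg b, sq_nonneg a,
    mul_nonneg hB (sq_nonneg b), sq_nonneg (a*b), sq_nonneg (a^2 - b^2)]

lemma eta_mono (a b1 b2 B : ℝ) (hB : 0 ≤ B) :
    (1/16)*(b1-b2)^4 ≤ (b1-b2) *
      ((1/4)*(a^2+b1^2)*(a+b1) - (1/4)*(a^2+b2^2)*(a+b2) + B/2*(b1-b2)) := by
  nlinarith [sq_nonneg (b1-b2), sq_nonneg (2*a+b1+b2), sq_nonneg (b1+b2),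
    mul_nonneg (sq_nonneg (b1-b2)) (sq_nonneg (2*a+b1+b2)),
    mul_nonneg (sq_nonneg (b1-b2)) (sq_nonneg (b1+b2)),
    mul_nonneg hB (sq_nonneg (b1-b2))]

lemma glap_add_smul (h t : ℝ) (w u : ZMod m × ZMod n → ℝ) (p : ZMod m × ZMod n) :
    glap h (w + t • u) p = glap h w p + t * glap h u p := by
  simp only [glap, Pi.add_apply, Pi.smul_apply, smul_eq_mul]
  ring

lemma continuous_glap_apply (h : ℝ) (p : ZMod m × ZMod n) :
    Continuous fun w : ZMod m × ZMod n → ℝ => glap h w p := by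
  unfold glap
  exact (((((continuous_apply ((p.1 + 1, p.2) : ZMod m × ZMod n)).add
    (continuous_apply ((p.1 - 1, p.2) : ZMod m × ZMod n))).add
    (continuous_apply ((p.1, p.2 + 1) : ZMod m × ZMod n))).add
    (continuous_apply ((p.1, p.2 - 1) : ZMod m × ZMod n))).sub
    (continuous_const.mul (continuous_apply p))).div_const _

lemma continuous_Wfun (a B : ℝ) : Continuous fun b : ℝ => Wfun a B b := by
  unfold Wfun
  fun_prop

lemma continuous_Hfun (h s Bc : ℝ) (K φg : ZMod m × ZMod n → ℝ) :
    Continuous (Hfun (m := m) (n := n) h s Bc K φg) := by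
  unfold Hfun
  have hsum : Continuous fun w : ZMod m × ZMod n → ℝ => ∑ p : ZMod m × ZMod n, w p :=
    continuous_finset_sum _ (fun p _ => continuous_apply p)
  refine Continuous.add (Continuous.sub (Continuous.add ?_ ?_) ?_) (hsum.pow 2)
  · exact continuous_finset_sum _ (fun p _ =>
      (continuous_Wfun (φg p) Bc).comp (continuous_const.add
        (continuous_const.mul (continuous_glap_apply h p))))
  · exact continuous_const.mul (continuous_finset_sum _ (fun p _ =>
      continuous_const.mul (continuous_glap_apply h p)))
  · exact continuous_const.mul (continuous_finset_sum _ (fun p _ =>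
      (continuous_glap_apply h p).mul (continuous_apply p)))

lemma hasDerivAt_Hfun_dir (h s Bc : ℝ) (K φg w u : ZMod m × ZMod n → ℝ) :
    HasDerivAt (fun t : ℝ => Hfun h s Bc K φg (w + t • u))
      ((∑ p : ZMod m × ZMod n, Wd (φg p) Bc (φg p + s * glap h w p) * (s * glap h u p))
        + s * (∑ p : ZMod m × ZMod n, K p * glap h u p)
        - (s/2) * (∑ p : ZMod m × ZMod n, (glap h u p * w p + glap h w p * u p))
        + 2 * (∑ p : ZMod m × ZMod n, w p) * (∑ p : ZMod m × ZMod n, u p)) 0 := by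
  have hEq : (fun t : ℝ => Hfun h s Bc K φg (w + t • u)) =
      fun t : ℝ =>
        (∑ p : ZMod m × ZMod n, Wfun (φg p) Bc ((φg p + s * glap h w p) + t * (s * glap h u p)))
        + s * (∑ p : ZMod m × ZMod n, (K p * glap h w p + t * (K p * glap h u p)))
        - (s/2) * (∑ p : ZMod m × ZMod n, (glap h w p + t * glap h u p) * (w p + t * u p))
        + ((∑ p : ZMod m × ZMod n, w p) + t * (∑ p : ZMod m × ZMod n, u p))^2 := by
    funext t
    unfold Hfun
    congr 1
    · congr 1
      · congr 1
        · exact Finset.sum_congr rfl (fun p _ => by rw [glap_add_smul]; congr 1; ring)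
        · congr 1
          exact Finset.sum_congr rfl (fun p _ => by rw [glap_add_smul]; ring)
      · congr 1
        exact Finset.sum_congr rfl (fun p _ => by
          rw [glap_add_smul, Pi.add_apply, Pi.smul_apply, smul_eq_mul])
    · congr 1
      simp [Pi.add_apply, Pi.smul_apply, smul_eq_mul, Finset.sum_add_distrib, Finset.mul_sum]
  rw [hEq]
  have P1 : HasDerivAt (fun t : ℝ =>
      ∑ p : ZMod m × ZMod n, Wfun (φg p) Bc ((φg p + s * glap h w p) + t * (s * glap h u p)))
      (∑ p : ZMod m × ZMod n, Wd (φg p) Bc (φg p + s * glap h w p) * (s * glap h u p)) 0 :=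
    HasDerivAt.fun_sum (fun p _ => hasDerivAt_W_affine _ _ _ _)
  have P2 : HasDerivAt (fun t : ℝ =>
      ∑ p : ZMod m × ZMod n, (K p * glap h w p + t * (K p * glap h u p)))
      (∑ p : ZMod m × ZMod n, K p * glap h u p) 0 :=
    HasDerivAt.fun_sum (fun p _ => by
      simpa using hasDerivAt_affine (K p * glap h w p) (K p * glap h u p))
  have P3 : HasDerivAt (fun t : ℝ =>
      ∑ p : ZMod m × ZMod n, (glap h w p + t * glap h u p) * (w p + t * u p))
      (∑ p : ZMod m × ZMod n, (glap h u p * w p + glap h w p * u p)) 0 := by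
    refine HasDerivAt.fun_sum (fun p _ => ?_)
    have := (hasDerivAt_affine (glap h w p) (glap h u p)).fun_mul (hasDerivAt_affine (w p) (u p))
    simpa [mul_comm] using this
  have P4 : HasDerivAt (fun t : ℝ =>
      ((∑ p : ZMod m × ZMod n, w p) + t * (∑ p : ZMod m × ZMod n, u p))^2)
      (2 * (∑ p : ZMod m × ZMod n, w p) * (∑ p : ZMod m × ZMod n, u p)) 0 := by
    have := (hasDerivAt_affine (∑ p : ZMod m × ZMod n, w p) (∑ p : ZMod m × ZMod n, u p)).fun_pow 2
    simpa using this
  exact ((P1.add (P2.const_mul s)).sub (P3.const_mul (s/2))).add P4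

set_option maxHeartbeats 1000000 in
lemma exists_solution (h s Bc : ℝ) (hh : 0 < h) (hs : 0 < s) (hBc : 0 ≤ Bc)
    (K φg : ZMod m × ZMod n → ℝ) :
    ∃ ψ : ZMod m × ZMod n → ℝ,
      ψ - φg = s • glap h (fun p => Wd (φg p) Bc (ψ p) + K p) := by
  classical
  obtain ⟨μ, hμpos, hμ⟩ := exists_mu (m := m) (n := n)
  set C0 : ℝ := ∑ p : ZMod m × ZMod n, (φg p)^4 with hC0
  set C1 : ℝ := ∑ p : ZMod m × ZMod n, |glap h K p| with hC1
  have hC1nn : 0 ≤ C1 := Finset.sum_nonneg (fun p _ => abs_nonneg _)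
  set κ : ℝ := s * μ / (2 * h^2) with hκdef
  have hκ : 0 < κ := by positivity
  set δ : ℝ := min (κ/2) 1 / 2 with hδdef
  have hδ : 0 < δ := by positivity
  have hδ1 : 2*δ ≤ κ/2 := by
    rw [hδdef]; have := min_le_left (κ/2) 1; linarith
  have hδ2 : 2*δ ≤ 1 := by
    rw [hδdef]; have := min_le_right (κ/2) 1; linarith
  set Q : ℝ := (s*C1)^2/(2*κ) with hQ
  set Cst : ℝ := C0 + Q with hCst
  have hNnn : (1:ℝ) ≤ (m*n : ℕ) := by
    exact_mod_cast Nat.one_le_iff_ne_zero.mpr (Nat.mul_ne_zero (NeZero.ne m) (NeZero.ne n))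
  have hmne : (m:ℝ) ≠ 0 := Nat.cast_ne_zero.mpr (NeZero.ne m)
  have hnne : (n:ℝ) ≠ 0 := Nat.cast_ne_zero.mpr (NeZero.ne n)
  -- coercivity bound
  have bound : ∀ w : ZMod m × ZMod n → ℝ, δ * ‖w‖^2 - Cst ≤ Hfun h s Bc K φg w := by
    intro w
    set t : ℝ := ∑ p : ZMod m × ZMod n, w p with ht
    set c : ℝ := t / (m*n : ℕ) with hc
    set v : ZMod m × ZMod n → ℝ := fun p => w p - c with hv
    have hsv : ∑ p : ZMod m × ZMod n, v p = 0 := by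
      simp only [hv]
      rw [Finset.sum_sub_distrib, sum_const_grid, hc, ← ht]
      push_cast
      field_simp
      ring
    have hglapwv : ∀ p, glap h w p = glap h v p := by
      intro p; simp only [glap, hv]; ring
    have ha : 0 ≤ ‖v‖ := norm_nonneg v
    have T1 : -C0 ≤ ∑ p : ZMod m × ZMod n, Wfun (φg p) Bc (φg p + s * glap h w p) := by
      rw [hC0, ← Finset.sum_neg_distrib]
      exact Finset.sum_le_sum (fun p _ => W_lb (φg p) Bc _ hBc)
    have T2 : -(s*C1*‖v‖) ≤ s * ∑ p : ZMod m × ZMod n, K p * glap h w p := by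
      have e1 : ∑ p : ZMod m × ZMod n, K p * glap h w p
          = ∑ p : ZMod m × ZMod n, glap h K p * v p := by
        rw [show (∑ p : ZMod m × ZMod n, K p * glap h w p)
            = ∑ p : ZMod m × ZMod n, K p * glap h v p from
          Finset.sum_congr rfl (fun p _ => by rw [hglapwv])]
        exact (glap_selfadj h K v).symm
      rw [e1]
      have e2 : ∀ p : ZMod m × ZMod n, -(|glap h K p| * ‖v‖) ≤ glap h K p * v p := by
        intro p
        have h1 : |glap h K p * v p| ≤ |glap h K p| * ‖v‖ := by
          rw [abs_mul]
          exact mul_le_mul_of_nonneg_left (by simpa using norm_le_pi_norm v p) (abs_nonneg _)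
        linarith [neg_abs_le (glap h K p * v p)]
      have e3 : -(C1*‖v‖) ≤ ∑ p : ZMod m × ZMod n, glap h K p * v p := by
        have := Finset.sum_le_sum (fun p (_ : p ∈ Finset.univ) => e2 p)
        calc -(C1*‖v‖) = ∑ p : ZMod m × ZMod n, -(|glap h K p| * ‖v‖) := by
              rw [Finset.sum_neg_distrib, ← Finset.sum_mul, ← hC1]
          _ ≤ _ := this
      calc -(s*C1*‖v‖) = s * (-(C1*‖v‖)) := by ring
        _ ≤ s * ∑ p : ZMod m × ZMod n, glap h K p * v p :=
            mul_le_mul_of_nonneg_left e3 hs.le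
    have T3 : κ * ‖v‖^2 ≤ -((s/2) * ∑ p : ZMod m × ZMod n, glap h w p * w p) := by
      have hwp : ∀ p, w p = v p + c := fun p => by simp [hv]
      have e1 : ∑ p : ZMod m × ZMod n, glap h w p * w p
          = ∑ p : ZMod m × ZMod n, glap h v p * v p := by
        calc ∑ p : ZMod m × ZMod n, glap h w p * w p
            = ∑ p : ZMod m × ZMod n, (glap h v p * v p + glap h v p * c) :=
              Finset.sum_congr rfl (fun p _ => by rw [hglapwv p, hwp p]; ring)
          _ = (∑ p : ZMod m × ZMod n, glap h v p * v p)
              + (∑ p : ZMod m × ZMod n, glap h v p) * c := by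
              rw [Finset.sum_add_distrib, Finset.sum_mul]
          _ = ∑ p : ZMod m × ZMod n, glap h v p * v p := by rw [sum_glap]; ring
      rw [e1, glap_dirichlet]
      have h2 := hμ v hsv
      have h3 : (s/(2*h^2)) * (μ * ‖v‖^2) ≤ (s/(2*h^2)) * gradNormSq v :=
        mul_le_mul_of_nonneg_left h2 (by positivity)
      calc κ * ‖v‖^2 = (s/(2*h^2)) * (μ * ‖v‖^2) := by rw [hκdef]; ring
        _ ≤ (s/(2*h^2)) * gradNormSq v := h3
        _ = -((s/2) * (-gradNormSq v / h^2)) := by field_simp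
    have hwnorm : ‖w‖ ≤ ‖v‖ + |c| := by
      have hw : w = v + (fun _ => c) := funext (fun p => by simp [hv])
      have hcn : ‖(fun _ : ZMod m × ZMod n => c)‖ = |c| := by
        rw [pi_norm_const]; exact Real.norm_eq_abs c
      calc ‖w‖ = ‖v + (fun _ : ZMod m × ZMod n => c)‖ := by rw [← hw]
        _ ≤ ‖v‖ + ‖(fun _ : ZMod m × ZMod n => c)‖ := norm_add_le _ _
        _ = ‖v‖ + |c| := by rw [hcn]
    have hcb : |c| ≤ |t| := by
      rw [hc, abs_div]
      have habs : |((m*n:ℕ):ℝ)| = ((m*n:ℕ):ℝ) := abs_of_nonneg (by positivity)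
      rw [habs, div_le_iff₀ (by linarith : (0:ℝ) < ((m*n:ℕ):ℝ))]
      nlinarith [abs_nonneg t]
    have key1 : δ * ‖w‖^2 ≤ (κ/2) * ‖v‖^2 + |t|^2 := by
      have h1 : ‖w‖^2 ≤ (‖v‖ + |t|)^2 :=
        pow_le_pow_left₀ (norm_nonneg w) (by linarith) 2
      have h2 : δ * ‖w‖^2 ≤ δ * (‖v‖ + |t|)^2 := mul_le_mul_of_nonneg_left h1 hδ.le
      nlinarith [sq_nonneg (‖v‖ - |t|), mul_le_mul_of_nonneg_right hδ1 (sq_nonneg ‖v‖),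
        mul_le_mul_of_nonneg_right hδ2 (sq_nonneg |t|), abs_nonneg t]
    have key2 : (κ/2) * ‖v‖^2 - Q ≤ κ*‖v‖^2 - s*C1*‖v‖ := by
      have hne : (2*κ) ≠ 0 := ne_of_gt (by linarith)
      have hQ2 : (s*C1)^2 = Q * (2*κ) := by rw [hQ, div_mul_cancel₀ _ hne]
      nlinarith [sq_nonneg (κ*‖v‖ - s*C1), hκ, hQ2]
    have ht2 : (∑ p : ZMod m × ZMod n, w p)^2 = |t|^2 := by rw [← ht, sq_abs]
    unfold Hfun
    rw [ht2]
    linarith [T1, T2, T3, key1, key2, hCst]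
  have htop : Filter.Tendsto (Hfun h s Bc K φg)
      (Filter.cocompact (ZMod m × ZMod n → ℝ)) Filter.atTop := by
    have hbase : Filter.Tendsto (fun x : ℝ => δ * x^2 - Cst) Filter.atTop Filter.atTop := by
      apply Filter.tendsto_atTop_add_const_right
      exact (Filter.tendsto_pow_atTop (two_ne_zero)).const_mul_atTop hδ
    exact Filter.tendsto_atTop_mono bound (hbase.comp tendsto_norm_cocompact_atTop)
  obtain ⟨w, hwmin⟩ := (continuous_Hfun h s Bc K φg).exists_forall_le htop
  set ψ : ZMod m × ZMod n → ℝ := fun p => φg p + s * glap h w p with hψ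
  have hD : ∀ u : ZMod m × ZMod n → ℝ,
      (∑ p : ZMod m × ZMod n, Wd (φg p) Bc (ψ p) * (s * glap h u p))
        + s * (∑ p : ZMod m × ZMod n, K p * glap h u p)
        - (s/2) * (∑ p : ZMod m × ZMod n, (glap h u p * w p + glap h w p * u p))
        + 2 * (∑ p : ZMod m × ZMod n, w p) * (∑ p : ZMod m × ZMod n, u p) = 0 := by
    intro u
    have hloc : IsLocalMin (fun r : ℝ => Hfun h s Bc K φg (w + r • u)) 0 :=
      Filter.Eventually.of_forall (fun r => by simpa using hwmin (w + r • u))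
    have := hloc.hasDerivAt_eq_zero (hasDerivAt_Hfun_dir h s Bc K φg w u)
    simpa [hψ] using this
  have hmean : (∑ p : ZMod m × ZMod n, w p) = 0 := by
    have h1 := hD (fun _ => 1)
    have hglap1 : ∀ p : ZMod m × ZMod n, glap h (fun _ => (1:ℝ)) p = 0 := by
      intro p; simp only [glap]; norm_num
    simp only [hglap1, mul_zero, zero_mul, zero_add, add_zero, Finset.sum_const_zero,
      mul_one, sum_glap, Finset.sum_const, Finset.card_univ, nsmul_eq_mul] at h1
    have hcard : (0:ℝ) < (Fintype.card (ZMod m × ZMod n) : ℝ) := by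
      have : 0 < Fintype.card (ZMod m × ZMod n) := Fintype.card_pos
      exact_mod_cast this
    have h1' : (2 * ∑ p : ZMod m × ZMod n, w p) * (Fintype.card (ZMod m × ZMod n) : ℝ) = 0 := by
      linarith
    rcases mul_eq_zero.mp h1' with h' | h'
    · rcases mul_eq_zero.mp h' with h'' | h''
      · norm_num at h''
      · exact h''
    · exact absurd h' (ne_of_gt hcard)
  set WdK : ZMod m × ZMod n → ℝ := fun q => Wd (φg q) Bc (ψ q) + K q with hWdK
  set R : ZMod m × ZMod n → ℝ := fun p => glap h WdK p - glap h w p with hR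
  have hRu : ∀ u : ZMod m × ZMod n → ℝ, (∑ p : ZMod m × ZMod n, R p * u p) = 0 := by
    intro u
    have h1 := hD u
    rw [hmean] at h1
    have e1 : (∑ p : ZMod m × ZMod n, Wd (φg p) Bc (ψ p) * (s * glap h u p))
        + s * (∑ p : ZMod m × ZMod n, K p * glap h u p)
        = s * ∑ p : ZMod m × ZMod n, WdK p * glap h u p := by
      rw [Finset.mul_sum, Finset.mul_sum, ← Finset.sum_add_distrib]
      exact Finset.sum_congr rfl (fun p _ => by rw [hWdK]; ring)
    have e2 : ∑ p : ZMod m × ZMod n, WdK p * glap h u p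
        = ∑ p : ZMod m × ZMod n, glap h WdK p * u p := (glap_selfadj h WdK u).symm
    have e3 : ∑ p : ZMod m × ZMod n, (glap h u p * w p + glap h w p * u p)
        = 2 * ∑ p : ZMod m × ZMod n, glap h w p * u p := by
      rw [Finset.sum_add_distrib]
      have h4 : ∑ p : ZMod m × ZMod n, glap h u p * w p
          = ∑ p : ZMod m × ZMod n, glap h w p * u p := by
        rw [glap_selfadj h u w]
        exact Finset.sum_congr rfl (fun p _ => mul_comm _ _)
      rw [h4]; ring
    rw [e1, e2, e3] at h1
    have h5 : s * (∑ p : ZMod m × ZMod n, R p * u p) = 0 := by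
      rw [show (∑ p : ZMod m × ZMod n, R p * u p)
          = (∑ p : ZMod m × ZMod n, glap h WdK p * u p)
            - ∑ p : ZMod m × ZMod n, glap h w p * u p from by
        rw [← Finset.sum_sub_distrib]
        exact Finset.sum_congr rfl (fun p _ => by rw [hR]; ring)]
      linarith [h1]
    rcases mul_eq_zero.mp h5 with h' | h'
    · exact absurd h' (ne_of_gt hs)
    · exact h'
  have hR0 : ∀ p, R p = 0 := by
    have h1 := hRu R
    have h2 := (Finset.sum_eq_zero_iff_of_nonneg
      (fun p (_ : p ∈ Finset.univ) => mul_self_nonneg (R p))).mp h1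
    intro p
    exact mul_self_eq_zero.mp (h2 p (Finset.mem_univ p))
  refine ⟨ψ, ?_⟩
  funext p
  have h7 : glap h WdK p - glap h w p = 0 := by simpa [hR] using hR0 p
  have h6 : glap h WdK p = glap h w p := by linarith
  have hgl : glap h (fun q => Wd (φg q) Bc (ψ q) + K q) p = glap h w p := by
    rw [← h6, hWdK]
  show ψ p - φg p = (s • glap h (fun q => Wd (φg q) Bc (ψ q) + K q)) p
  rw [Pi.smul_apply, smul_eq_mul, hgl]
  simp only [hψ]
  ring

end Stmt6Aux2

/-- unconditional unique solvability and discrete mass conservation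
of the second-order convex-splitting nCH scheme `φ^{k+1} − φ^k = s Δ_h w^{k+1/2}`. -/
theorem stmt6 (m n : ℕ) [NeZero m] [NeZero n] (h s : ℝ) (hh : 0 < h) (hs : 0 < s)
    (Jc Je : ZMod m × ZMod n → ℝ) (hJc0 : ∀ p, 0 ≤ Jc p) (hJe0 : ∀ p, 0 ≤ Je p)
    (hJce : EvenKer Jc) (hJee : EvenKer Je)
    (γc γe : ℝ) (hγc : 0 ≤ γc) (hγe : 0 ≤ γe)
    (J : ZMod m × ZMod n → ℝ) (hJ : J = Jc - Je)
    (Bc Be : ℝ) (hBc : Bc = gconvOne h Jc + γc) (hBe : Be = gconvOne h Je + γe)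
    (φold φ : ZMod m × ZMod n → ℝ) :
    (∃! φnew : ZMod m × ZMod n → ℝ,
        φnew - φ = s • glap h (chemPot h Bc Be J φold φ φnew))
    ∧ (∀ φnew : ZMod m × ZMod n → ℝ,
        φnew - φ = s • glap h (chemPot h Bc Be J φold φ φnew) →
        gip (φnew - φ) (fun _ => (1 : ℝ)) = 0) := by
  classical
  -- abbreviations
  set K : ZMod m × ZMod n → ℝ := fun p => Bc/2 * φ p - Be * ((3/2) * φ p - (1/2) * φold p)
      - gconv h J (fun q => (3/2) * φ q - (1/2) * φold q) p with hK
  have hBc0 : 0 ≤ Bc := by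
    rw [hBc]
    unfold gconvOne
    have : 0 ≤ ∑ q : ZMod m × ZMod n, Jc q := Finset.sum_nonneg (fun q _ => hJc0 q)
    positivity
  have hchem : ∀ ψ : ZMod m × ZMod n → ℝ,
      chemPot h Bc Be J φold φ ψ = fun p => Wd (φ p) Bc (ψ p) + K p := by
    intro ψ
    funext p
    simp only [chemPot, etaNL, Wd, hK]
    ring
  -- mass conservation
  have mass : ∀ φnew : ZMod m × ZMod n → ℝ,
      φnew - φ = s • glap h (chemPot h Bc Be J φold φ φnew) →
      gip (φnew - φ) (fun _ => (1 : ℝ)) = 0 := by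
    intro ψ he
    rw [he]
    unfold gip
    simp only [Pi.smul_apply, smul_eq_mul, mul_one]
    rw [← Finset.mul_sum, sum_glap, mul_zero]
  refine ⟨?_, mass⟩
  -- existence
  obtain ⟨ψ₀, hψ₀⟩ := exists_solution h s Bc hh hs hBc0 K φ
  refine ⟨ψ₀, ?_, ?_⟩
  · show ψ₀ - φ = s • glap h (chemPot h Bc Be J φold φ ψ₀)
    rw [hchem ψ₀]
    exact hψ₀
  · -- uniqueness
    intro ψ₁ hψ₁
    rw [hchem ψ₁] at hψ₁
    -- both solve; show ψ₁ = ψ₀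
    have hdiff : ∀ p, ψ₁ p - ψ₀ p
        = s * glap h (fun q => Wd (φ q) Bc (ψ₁ q) - Wd (φ q) Bc (ψ₀ q)) p := by
      intro p
      have h1 := congrFun hψ₁ p
      have h0 := congrFun hψ₀ p
      rw [Pi.sub_apply, Pi.smul_apply, smul_eq_mul] at h1 h0
      have : ψ₁ p - ψ₀ p = s * glap h (fun q => Wd (φ q) Bc (ψ₁ q) + K q) p
          - s * glap h (fun q => Wd (φ q) Bc (ψ₀ q) + K q) p := by linarith
      rw [this]
      simp only [glap]
      ring
    set d : ZMod m × ZMod n → ℝ := fun q => Wd (φ q) Bc (ψ₁ q) - Wd (φ q) Bc (ψ₀ q) with hd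
    have hip : ∑ p : ZMod m × ZMod n, (ψ₁ p - ψ₀ p) * d p
        = s * ∑ p : ZMod m × ZMod n, glap h d p * d p := by
      rw [Finset.mul_sum]
      exact Finset.sum_congr rfl (fun p _ => by rw [hdiff p]; ring)
    rw [glap_dirichlet] at hip
    have hle : ∑ p : ZMod m × ZMod n, (ψ₁ p - ψ₀ p) * d p ≤ 0 := by
      rw [hip]
      have h1 : 0 ≤ gradNormSq d := gradNormSq_nonneg d
      have h2 : 0 < h^2 := by positivity
      have : -gradNormSq d / h^2 ≤ 0 := div_nonpos_of_nonpos_of_nonneg (by linarith) h2.le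
      nlinarith
    have hge : ∀ p : ZMod m × ZMod n, (1/16) * (ψ₁ p - ψ₀ p)^4 ≤ (ψ₁ p - ψ₀ p) * d p := by
      intro p
      have h9 := eta_mono (φ p) (ψ₁ p) (ψ₀ p) Bc hBc0
      have heq : (ψ₁ p - ψ₀ p) *
          ((1/4)*((φ p)^2+(ψ₁ p)^2)*(φ p+ψ₁ p) - (1/4)*((φ p)^2+(ψ₀ p)^2)*(φ p+ψ₀ p)
            + Bc/2*(ψ₁ p-ψ₀ p))
          = (ψ₁ p - ψ₀ p) * d p := by
        simp only [hd, Wd]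
        ring
      linarith [h9, heq]
    have hsum4 : ∑ p : ZMod m × ZMod n, (1/16) * (ψ₁ p - ψ₀ p)^4 ≤ 0 :=
      le_trans (Finset.sum_le_sum (fun p _ => hge p)) hle
    have hzero : ∀ p : ZMod m × ZMod n, (1/16) * (ψ₁ p - ψ₀ p)^4 = 0 := by
      have := (Finset.sum_eq_zero_iff_of_nonneg
        (fun p (_ : p ∈ Finset.univ) => by positivity)).mp
        (le_antisymm hsum4 (Finset.sum_nonneg (fun p _ => by positivity)))
      intro p; exact this p (Finset.mem_univ p)
    funext p
    have h4 : (ψ₁ p - ψ₀ p)^4 = 0 := by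
      have := hzero p; linarith
    have := pow_eq_zero_iff (n := 4) (by norm_num) |>.mp h4
    linarith [sub_eq_zero.mp this]
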